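/- Suppose there exist relatively prime positive integers Ñ and M̃ such that Ñλ^i ∈ ℕ for all i and M̃χ^j ∈ ℕ for all j, where λ ∈ ℝ^N has positive entries summing to 1 (N ≥ 2) and χ ∈ ℝ^M has nonnegative entries. Then d_λ = dist(S'_λ, S_χ) ≥ 1/(M̃Ñ). -/

import Mathlib

/-- The set of all subset sums of a vector `V ∈ ℝ^k`. -/
def subsetSums {k : ℕ} (V : Fin k → ℝ) : Set ℝ :=
  {s | ∃ A : Finset (Fin k), s = ∑ i ∈ A, V i}

/-- The set of proper nonempty subset sums of a vector `V ∈ ℝ^k`. -/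
def properSubsetSums {k : ℕ} (V : Fin k → ℝ) : Set ℝ :=
  {s | ∃ A : Finset (Fin k), A.Nonempty ∧ A ≠ Finset.univ ∧ s = ∑ i ∈ A, V i}

/-- `d_λ = dist(S'_λ, S_χ)`. -/
noncomputable def dWeight {N M : ℕ} (lam : Fin N → ℝ) (chi : Fin M → ℝ) : ℝ :=
  sInf {d | ∃ x ∈ properSubsetSums lam, ∃ y ∈ subsetSums chi, d = |x - y|}

/-- if `Ñλ^i ∈ ℕ` and `M̃χ^j ∈ ℕ` with `gcd(Ñ, M̃) = 1`, then
`d_λ ≥ 1/(M̃Ñ)`. -/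
theorem stmt3 {N M : ℕ} (hN : 2 ≤ N) (lam : Fin N → ℝ) (chi : Fin M → ℝ)
    (hlampos : ∀ i, 0 < lam i) (hlamsum : ∑ i, lam i = 1)
    (hchinn : ∀ j, 0 ≤ chi j)
    (Nt Mt : ℕ) (hNt : 0 < Nt) (hMt : 0 < Mt) (hcop : Nat.Coprime Nt Mt)
    (hlamint : ∀ i, ∃ n : ℕ, (Nt : ℝ) * lam i = n)
    (hchiint : ∀ j, ∃ n : ℕ, (Mt : ℝ) * chi j = n) :
    1 / ((Mt : ℝ) * Nt) ≤ dWeight lam chi := by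
  have hNt0 : (Nt:ℝ) ≠ 0 := Nat.cast_ne_zero.mpr hNt.ne'
  have hMt0 : (Mt:ℝ) ≠ 0 := Nat.cast_ne_zero.mpr hMt.ne'
  apply le_csInf
  · refine ⟨|lam ⟨0, by omega⟩ - 0|, lam ⟨0, by omega⟩, ⟨{⟨0, by omega⟩}, Finset.singleton_nonempty _, ?_, by simp⟩, 0, ⟨∅, by simp⟩, rfl⟩
    intro h
    have h1 : (⟨1, by omega⟩ : Fin N) ∈ ({⟨0, by omega⟩} : Finset (Fin N)) := by
      rw [h]; exact Finset.mem_univ _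
    simp [Fin.ext_iff] at h1
  · rintro d ⟨x, ⟨A, hA, hAne, hx⟩, y, ⟨J, hy⟩, rfl⟩
    choose f hf using hlamint
    choose g hg using hchiint
    set a := ∑ i ∈ A, f i with ha
    set b := ∑ j ∈ J, g j with hb
    have hNx : (Nt:ℝ) * x = (a:ℝ) := by
      rw [hx, Finset.mul_sum, ha]
      push_cast
      exact Finset.sum_congr rfl fun i _ => hf i
    have hMy : (Mt:ℝ) * y = (b:ℝ) := by
      rw [hy, Finset.mul_sum, hb]
      push_cast
      exact Finset.sum_congr rfl fun j _ => hg j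
    have hx0 : 0 < x := hx ▸ Finset.sum_pos (fun i _ => hlampos i) hA
    have hx1 : x < 1 := by
      rw [hx, ← hlamsum]
      obtain ⟨i, hi⟩ : ∃ i, i ∉ A := by
        by_contra h
        push_neg at h
        exact hAne (Finset.eq_univ_of_forall h)
      exact Finset.sum_lt_sum_of_subset (Finset.subset_univ A) (Finset.mem_univ i) hi
        (hlampos i) (fun j _ _ => (hlampos j).le)
    have ha0 : 0 < a := by
      by_contra h
      push_neg at h
      interval_cases a
      have : (Nt:ℝ) * x = 0 := by rw [hNx]; norm_num
      nlinarith [hlampos, (Nat.cast_pos (α := ℝ)).mpr hNt]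
    have haN : a < Nt := by
      have : (a:ℝ) < Nt := by rw [← hNx]; nlinarith [(Nat.cast_pos (α := ℝ)).mpr hNt]
      exact_mod_cast this
    have key : (a:ℤ) * Mt ≠ (b:ℤ) * Nt := by
      intro h
      have h' : a * Mt = b * Nt := by exact_mod_cast h
      have hdvd : Nt ∣ a * Mt := ⟨b, by rw [h', Nat.mul_comm]⟩
      have : Nt ∣ a := hcop.dvd_of_dvd_mul_right hdvd
      exact absurd (Nat.le_of_dvd ha0 this) (not_le.mpr haN)
    have hkey : (1:ℝ) ≤ |(a:ℝ) * Mt - (b:ℝ) * Nt| := by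
      have : (1:ℤ) ≤ |(a:ℤ) * Mt - (b:ℤ) * Nt| := Int.one_le_abs (sub_ne_zero.mpr key)
      calc (1:ℝ) = ((1:ℤ):ℝ) := by norm_num
        _ ≤ ((|(a:ℤ) * Mt - (b:ℤ) * Nt|:ℤ):ℝ) := by exact_mod_cast this
        _ = |(a:ℝ) * Mt - (b:ℝ) * Nt| := by push_cast; rw [abs_sub_comm]
    have hxy : x - y = ((a:ℝ) * Mt - (b:ℝ) * Nt) / ((Mt:ℝ) * Nt) := by
      have hx' : x = (a:ℝ) / Nt := by field_simp [← hNx]; linarith [hNx]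
      have hy' : y = (b:ℝ) / Mt := by field_simp [← hMy]; linarith [hMy]
      rw [hx', hy']
      field_simp
    rw [hxy, abs_div, abs_of_pos (by positivity : (0:ℝ) < (Mt:ℝ) * Nt)]
    gcongr
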